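/- Let A, B, A′, B′ be points of the Euclidean plane ℝ² and ε ≥ 0. Assume ‖A − A′‖ ≤ ε, ‖B − B′‖ ≤ ε, and ‖A′ − B′‖ > 2ε. Then the vectors B − A and B′ − A′ are nonzero and the undirected angle between them satisfies ∠(B − A, B′ − A′) ≤ 2ε/(‖A′ − B′‖ − 2ε). -/

import Mathlib

set_option maxHeartbeats 1000000

/-- Geometric estimate underlying Lemma 4.2: if the endpoints of a segment are moved by
at most `ε` and the new segment has length `> 2ε`, then the two segments are nondegenerate
and the undirected angle between them is at most `2ε/(‖A′−B′‖−2ε)`. -/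
theorem stmt3 (A B A' B' : EuclideanSpace ℝ (Fin 2)) (ε : ℝ) (hε : 0 ≤ ε)
    (hA : ‖A - A'‖ ≤ ε) (hB : ‖B - B'‖ ≤ ε) (hl : 2 * ε < ‖A' - B'‖) :
    B - A ≠ 0 ∧ B' - A' ≠ 0 ∧
      InnerProductGeometry.angle (B - A) (B' - A') ≤ 2 * ε / (‖A' - B'‖ - 2 * ε) := by
  set u := B - A with hu_def
  set v := B' - A' with hv_def
  have hvAB : ‖A' - B'‖ = ‖v‖ := by rw [hv_def, norm_sub_rev]
  rw [hvAB] at hl ⊢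
  have hvpos : 0 < ‖v‖ := lt_of_le_of_lt (by positivity) hl
  have hd : ‖u - v‖ ≤ 2 * ε := by
    have : u - v = (B - B') - (A - A') := by rw [hu_def, hv_def]; abel
    calc ‖u - v‖ = ‖(B - B') - (A - A')‖ := by rw [this]
      _ ≤ ‖B - B'‖ + ‖A - A'‖ := norm_sub_le _ _
      _ ≤ ε + ε := add_le_add hB hA
      _ = 2 * ε := by ring
  have huge : ‖v‖ - 2 * ε ≤ ‖u‖ := by
    have h1 : v = u + (v - u) := by abel
    have h2 : ‖v‖ ≤ ‖u‖ + ‖v - u‖ := by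
      calc ‖v‖ = ‖u + (v - u)‖ := by rw [← h1]
        _ ≤ ‖u‖ + ‖v - u‖ := norm_add_le _ _
    have h3 : ‖v - u‖ = ‖u - v‖ := norm_sub_rev _ _
    linarith [h3.le.trans hd]
  have hupos : 0 < ‖u‖ := lt_of_lt_of_le (by linarith) huge
  have hune : u ≠ 0 := by intro h; rw [h, norm_zero] at hupos; exact lt_irrefl 0 hupos
  have hvne : v ≠ 0 := by intro h; rw [h, norm_zero] at hvpos; exact lt_irrefl 0 hvpos
  refine ⟨hune, hvne, ?_⟩
  -- inner product bounds
  have hexp : ‖u - v‖ ^ 2 = ‖u‖ ^ 2 - 2 * inner ℝ u v + ‖v‖ ^ 2 := by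
    rw [@norm_sub_sq_real]
  have hinner : ‖v‖ * (‖v‖ - 2 * ε) ≤ (inner ℝ u v : ℝ) := by
    nlinarith [hd, hexp, sq_nonneg (‖u‖ - ‖v‖), hvpos, hupos,
      sq_nonneg (‖u - v‖), norm_nonneg (u - v)]
  have hip : (inner ℝ u v : ℝ) ≤ ‖u‖ * ‖v‖ := real_inner_le_norm u v
  have hinnerpos : 0 < (inner ℝ u v : ℝ) := lt_of_lt_of_le (by nlinarith) hinner
  set θ := InnerProductGeometry.angle u v with hθ_def
  have hθ0 : 0 ≤ θ := InnerProductGeometry.angle_nonneg u v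
  have hθπ : θ ≤ Real.pi := InnerProductGeometry.angle_le_pi u v
  have hcosmul : Real.cos θ * (‖u‖ * ‖v‖) = (inner ℝ u v : ℝ) :=
    InnerProductGeometry.cos_angle_mul_norm_mul_norm u v
  have hcospos : 0 < Real.cos θ := by
    have := mul_pos hupos hvpos
    nlinarith [hcosmul, hinnerpos]
  have hθlt : θ < Real.pi / 2 := by
    by_contra h
    push_neg at h
    have := Real.cos_nonpos_of_pi_div_two_le_of_le h (by linarith [Real.pi_pos])
    linarith
  -- sine bound : sin θ * ‖u‖ ≤ 2 ε
  have hsinmul : Real.sin θ * (‖u‖ * ‖v‖) =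
      Real.sqrt ((inner ℝ u u : ℝ) * (inner ℝ v v : ℝ) - (inner ℝ u v : ℝ) * (inner ℝ u v : ℝ)) :=
    InnerProductGeometry.sin_angle_mul_norm_mul_norm u v
  have hsin : Real.sin θ * ‖u‖ ≤ 2 * ε := by
    have huu : (inner ℝ u u : ℝ) = ‖u‖ ^ 2 := real_inner_self_eq_norm_sq u
    have hvv : (inner ℝ v v : ℝ) = ‖v‖ ^ 2 := real_inner_self_eq_norm_sq v
    have hle : (inner ℝ u u : ℝ) * (inner ℝ v v : ℝ) - (inner ℝ u v : ℝ) * (inner ℝ u v : ℝ)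
        ≤ (‖u - v‖ * ‖v‖) ^ 2 := by
      rw [huu, hvv]
      nlinarith [hexp, sq_nonneg (‖v‖ ^ 2 - (inner ℝ u v : ℝ))]
    have hs1 := Real.sqrt_le_sqrt hle
    rw [Real.sqrt_sq (by positivity : (0:ℝ) ≤ ‖u - v‖ * ‖v‖)] at hs1
    have hs2 : Real.sin θ * (‖u‖ * ‖v‖) ≤ ‖u - v‖ * ‖v‖ := hsinmul.le.trans hs1
    have hs3 : ‖u - v‖ * ‖v‖ ≤ (2 * ε) * ‖v‖ := by nlinarith
    nlinarith [hs2, hs3, hvpos]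
  -- cosine bound : ‖v‖ - 2ε ≤ cos θ * ‖u‖
  have hcos : ‖v‖ - 2 * ε ≤ Real.cos θ * ‖u‖ := by
    nlinarith [hcosmul, hinner, hvpos]
  -- conclude via θ ≤ tan θ
  have hm : 0 < ‖v‖ - 2 * ε := by linarith
  rcases eq_or_lt_of_le hθ0 with h0 | h0
  · rw [← h0]; positivity
  · have htan : θ ≤ Real.tan θ := le_of_lt (Real.lt_tan h0 hθlt)
    have htaneq : Real.tan θ = Real.sin θ / Real.cos θ := Real.tan_eq_sin_div_cos θ
    have hsinθ : 0 ≤ Real.sin θ := Real.sin_nonneg_of_nonneg_of_le_pi hθ0 hθπ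
    have hfin : Real.sin θ / Real.cos θ ≤ 2 * ε / (‖v‖ - 2 * ε) := by
      rw [div_le_div_iff₀ hcospos hm]
      nlinarith [hsin, hcos, hsinθ, hcospos, hε, hupos]
    calc θ ≤ Real.tan θ := htan
      _ = Real.sin θ / Real.cos θ := htaneq
      _ ≤ 2 * ε / (‖v‖ - 2 * ε) := hfin
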